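/- Let f : V₁ → V₂ be a linear map between finite-dimensional real vector spaces. For a vector Dirac structure L on V₂, the backward image f*L := {(X, f*(β)) : X ∈ V₁, β ∈ V₂*, (f(X), β) ∈ L} is a vector Dirac structure on V₁; and for a vector Dirac structure L on V₁, the forward image f_*L := {(f(X), β) : X ∈ V₁, β ∈ V₂*, (X, f*(β)) ∈ L} is a vector Dirac structure on V₂. -/

import Mathlib

open Module LinearMap Submodule

/-- The canonical pairing on `V × V*`. -/
noncomputable def pairB (V : Type*) [AddCommGroup V] [Module ℝ V] :
    LinearMap.BilinForm ℝ (V × Module.Dual ℝ V) :=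
  LinearMap.mk₂ ℝ (fun z w => z.2 w.1 + w.2 z.1)
    (by intro m₁ m₂ n; simp; ring)
    (by intro c m n; simp; ring)
    (by intro m n₁ n₂; simp; ring)
    (by intro c m n; simp; ring)

@[simp] lemma pairB_apply {V : Type*} [AddCommGroup V] [Module ℝ V]
    (z w : V × Module.Dual ℝ V) : pairB V z w = z.2 w.1 + w.2 z.1 := rfl

lemma pairB_symm {V : Type*} [AddCommGroup V] [Module ℝ V]
    (z w : V × Module.Dual ℝ V) : pairB V z w = pairB V w z := by simp [add_comm]

lemma pairB_nondeg (V : Type*) [AddCommGroup V] [Module ℝ V] :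
    ∀ x : V × Module.Dual ℝ V, (∀ y, pairB V x y = 0) → x = 0 := by
  intro x hx
  have h1 : x.2 = 0 := by
    ext v; have := hx (v, 0); simpa using this
  have h2 : x.1 = 0 := by
    rw [← Module.forall_dual_apply_eq_zero_iff ℝ x.1]
    intro φ; have := hx (0, φ); simpa using this
  exact Prod.ext h2 h1

/-- rank formula for image of a submodule. -/
lemma finrank_map_add_finrank_inf_ker {M N : Type*} [AddCommGroup M] [Module ℝ M]
    [FiniteDimensional ℝ M] [AddCommGroup N] [Module ℝ N]
    (h : M →ₗ[ℝ] N) (E : Submodule ℝ M) :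
    finrank ℝ (E.map h) + finrank ℝ (LinearMap.ker h ⊓ E : Submodule ℝ M) = finrank ℝ E := by
  have h1 := LinearMap.finrank_range_add_finrank_ker (h.domRestrict E)
  rw [LinearMap.range_domRestrict, LinearMap.ker_domRestrict] at h1
  have h2 : finrank ℝ ((LinearMap.ker h).comap E.subtype : Submodule ℝ E)
      = finrank ℝ (LinearMap.ker h ⊓ E : Submodule ℝ M) := by
    rw [inf_comm, ← Submodule.map_comap_subtype E (LinearMap.ker h)]
    exact (Submodule.equivMapOfInjective E.subtype E.injective_subtype _).finrank_eq
  omega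

lemma map_inf_comap {M N : Type*} [AddCommGroup M] [Module ℝ M] [AddCommGroup N] [Module ℝ N]
    (g : M →ₗ[ℝ] N) (p : Submodule ℝ M) (q : Submodule ℝ N) :
    (p ⊓ q.comap g).map g = p.map g ⊓ q := by
  apply le_antisymm
  · refine le_inf (Submodule.map_mono inf_le_left) ?_
    refine le_trans (Submodule.map_mono inf_le_right) (Submodule.map_comap_le g q)
  · rintro x ⟨⟨a, ha, rfl⟩, hq⟩
    exact ⟨a, ⟨ha, hq⟩, rfl⟩

/-- Key dimension formula for maximal isotropic subspaces. -/
lemma core_dim {M : Type*} [AddCommGroup M] [Module ℝ M] [FiniteDimensional ℝ M]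
    (B : LinearMap.BilinForm ℝ M) (hsymm : ∀ x y, B x y = B y x)
    (hnd : ∀ x, (∀ y, B x y = 0) → x = 0)
    (L W : Submodule ℝ M) (hiso : ∀ x ∈ L, ∀ y ∈ L, B x y = 0)
    (hdim : finrank ℝ M = 2 * finrank ℝ L) :
    finrank ℝ (W ⊓ L : Submodule ℝ M) + finrank ℝ L
      = finrank ℝ W + finrank ℝ (B.orthogonal W ⊓ L : Submodule ℝ M) := by
  have hrefl : B.IsRefl := fun x y h => by rw [hsymm]; exact h
  have hnd' : B.Nondegenerate := by
    exact ⟨fun m hm => hnd m hm, fun m hm => hnd m (fun y => by rw [hsymm]; exact hm y)⟩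
  have horththis : B.orthogonal ⊤ = ⊥ := B.orthogonal_top_eq_bot hnd'
  have hofr : ∀ U : Submodule ℝ M,
      finrank ℝ U + finrank ℝ (B.orthogonal U) = finrank ℝ M := by
    intro U
    have := LinearMap.BilinForm.finrank_add_finrank_orthogonal hrefl U (B := B)
    rwa [horththis, inf_bot_eq, finrank_bot, add_zero] at this
  -- L is maximal isotropic: L = orthogonal L
  have hLle : L ≤ B.orthogonal L := by
    intro x hx
    rw [LinearMap.BilinForm.mem_orthogonal_iff]
    intro n hn; exact hiso n hn x hx
  have hLeq : B.orthogonal L = L := by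
    refine (Submodule.eq_of_le_of_finrank_le hLle ?_).symm
    have := hofr L; omega
  -- orthogonal of sup
  have horthsup : B.orthogonal (W ⊔ L) = B.orthogonal W ⊓ L := by
    rw [← hLeq]
    conv_lhs => rw [hLeq]
    ext m
    simp only [LinearMap.BilinForm.mem_orthogonal_iff, Submodule.mem_inf]
    constructor
    · intro hm
      exact ⟨fun n hn => hm n (Submodule.mem_sup_left hn),
             fun n hn => hm n (Submodule.mem_sup_right hn)⟩
    · rintro ⟨h1, h2⟩ n hn
      rcases Submodule.mem_sup.mp hn with ⟨w, hw, l, hl, rfl⟩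
      have : B (w + l) m = B w m + B l m := by simp
      rw [this, h1 w hw, h2 l hl, add_zero]
  have h1 := hofr (W ⊔ L)
  rw [horthsup] at h1
  have h2 := Submodule.finrank_sup_add_finrank_inf_eq W L
  omega

/-- The combined core lemma: image under `h` of preimage under `g` of a maximal
isotropic subspace is isotropic of the right dimension. -/
lemma image_core {A M N : Type*} [AddCommGroup A] [Module ℝ A] [FiniteDimensional ℝ A]
    [AddCommGroup M] [Module ℝ M] [FiniteDimensional ℝ M]
    [AddCommGroup N] [Module ℝ N] [FiniteDimensional ℝ N]
    (g : A →ₗ[ℝ] M) (h : A →ₗ[ℝ] N)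
    (BM : LinearMap.BilinForm ℝ M) (BN : LinearMap.BilinForm ℝ N)
    (hsymm : ∀ x y, BM x y = BM y x) (hnd : ∀ x, (∀ y, BM x y = 0) → x = 0)
    (hcompat : ∀ u v : A, BN (h u) (h v) = BM (g u) (g v))
    (horth : BM.orthogonal (LinearMap.range g) = (LinearMap.ker h).map g)
    (hker : LinearMap.ker g ⊓ LinearMap.ker h = ⊥)
    (L : Submodule ℝ M) (hiso : ∀ x ∈ L, ∀ y ∈ L, BM x y = 0)
    (hdim : finrank ℝ M = 2 * finrank ℝ L) :
    (∀ x ∈ (L.comap g).map h, ∀ y ∈ (L.comap g).map h, BN x y = 0) ∧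
    finrank ℝ ((L.comap g).map h) + finrank ℝ M = finrank ℝ A + finrank ℝ L := by
  constructor
  · rintro x ⟨u, hu, rfl⟩ y ⟨v, hv, rfl⟩
    rw [hcompat]
    exact hiso _ hu _ hv
  set E := L.comap g with hE
  -- (a)
  have ha := finrank_map_add_finrank_inf_ker h E
  -- (b)
  have hbmap : E.map g = LinearMap.range g ⊓ L := by
    rw [hE, Submodule.map_comap_eq]
  have hbker : (LinearMap.ker g ⊓ E : Submodule ℝ A) = LinearMap.ker g := by
    rw [inf_eq_left]
    intro x hx
    simp only [hE, Submodule.mem_comap]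
    rw [LinearMap.mem_ker] at hx
    rw [hx]; exact L.zero_mem
  have hb := finrank_map_add_finrank_inf_ker g E
  rw [hbmap, hbker] at hb
  -- (c) : g injective on ker h ⊓ E
  have hcker : (LinearMap.ker g ⊓ (LinearMap.ker h ⊓ E) : Submodule ℝ A) = ⊥ := by
    rw [← inf_assoc, hker, bot_inf_eq]
  have hc := finrank_map_add_finrank_inf_ker g (LinearMap.ker h ⊓ E)
  rw [hcker, finrank_bot, add_zero] at hc
  -- (d)
  have hd : ((LinearMap.ker h ⊓ E : Submodule ℝ A)).map g
      = (LinearMap.ker h).map g ⊓ L := map_inf_comap g _ L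
  -- (e)
  have he := core_dim BM hsymm hnd L (LinearMap.range g) hiso hdim
  rw [horth] at he
  -- (f)
  have hf := LinearMap.finrank_range_add_finrank_ker g
  rw [hd] at hc
  omega
open Module LinearMap Submodule in
theorem stmt_9 (V₁ V₂ : Type*) [AddCommGroup V₁] [Module ℝ V₁] [FiniteDimensional ℝ V₁]
    [AddCommGroup V₂] [Module ℝ V₂] [FiniteDimensional ℝ V₂] (f : V₁ →ₗ[ℝ] V₂) :
    (∀ L : Submodule ℝ (V₂ × Module.Dual ℝ V₂),
      (∀ z ∈ L, ∀ w ∈ L, z.2 w.1 + w.2 z.1 = 0) →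
      Module.finrank ℝ L = Module.finrank ℝ V₂ →
      ∃ Lb : Submodule ℝ (V₁ × Module.Dual ℝ V₁),
        (Lb : Set (V₁ × Module.Dual ℝ V₁)) =
          {p | ∃ β : Module.Dual ℝ V₂, p.2 = β ∘ₗ f ∧ (f p.1, β) ∈ L} ∧
        (∀ z ∈ Lb, ∀ w ∈ Lb, z.2 w.1 + w.2 z.1 = 0) ∧
        Module.finrank ℝ Lb = Module.finrank ℝ V₁) ∧
    (∀ L : Submodule ℝ (V₁ × Module.Dual ℝ V₁),
      (∀ z ∈ L, ∀ w ∈ L, z.2 w.1 + w.2 z.1 = 0) →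
      Module.finrank ℝ L = Module.finrank ℝ V₁ →
      ∃ Lf : Submodule ℝ (V₂ × Module.Dual ℝ V₂),
        (Lf : Set (V₂ × Module.Dual ℝ V₂)) =
          {q | ∃ X : V₁, q.1 = f X ∧ (X, q.2 ∘ₗ f) ∈ L} ∧
        (∀ z ∈ Lf, ∀ w ∈ Lf, z.2 w.1 + w.2 z.1 = 0) ∧
        Module.finrank ℝ Lf = Module.finrank ℝ V₂) := by
  set g : (V₁ × Module.Dual ℝ V₂) →ₗ[ℝ] (V₂ × Module.Dual ℝ V₂) :=
    f.prodMap LinearMap.id with hg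
  set h : (V₁ × Module.Dual ℝ V₂) →ₗ[ℝ] (V₁ × Module.Dual ℝ V₁) :=
    LinearMap.id.prodMap f.dualMap with hh
  -- shared facts
  have hgapp : ∀ u : V₁ × Module.Dual ℝ V₂, g u = (f u.1, u.2) := fun u => rfl
  have hhapp : ∀ u : V₁ × Module.Dual ℝ V₂, h u = (u.1, u.2 ∘ₗ f) := by
    intro u; rw [hh]; exact Prod.ext rfl (f.dualMap_apply' u.2)
  have hker : LinearMap.ker g ⊓ LinearMap.ker h = ⊥ := by
    rw [Submodule.eq_bot_iff]
    rintro ⟨X, β⟩ hx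
    rw [Submodule.mem_inf] at hx
    obtain ⟨h1, h2⟩ := hx
    rw [LinearMap.mem_ker, hhapp] at h2
    rw [LinearMap.mem_ker, hgapp] at h1
    have hX : X = 0 := congrArg Prod.fst h2
    have hb : β = 0 := congrArg Prod.snd h1
    rw [hX, hb]; rfl
  have hcompat : ∀ u v : V₁ × Module.Dual ℝ V₂,
      pairB V₁ (h u) (h v) = pairB V₂ (g u) (g v) := by
    intro u v
    rw [hhapp, hhapp, hgapp, hgapp]
    simp
  constructor
  · -- backward image
    intro L hLiso hLrank
    have horth : (pairB V₂).orthogonal (LinearMap.range g) = (LinearMap.ker h).map g := by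
      ext ⟨Y, β⟩
      rw [LinearMap.BilinForm.mem_orthogonal_iff]
      constructor
      · intro hm
        have hY : Y = 0 := by
          rw [← Module.forall_dual_apply_eq_zero_iff ℝ Y]
          intro γ
          have := hm ((0 : V₂), γ) ⟨((0 : V₁), γ), by rw [hgapp]; simp⟩
          simpa [LinearMap.BilinForm.IsOrtho] using this
        have hβ : ∀ X : V₁, β (f X) = 0 := by
          intro X
          have := hm (f X, (0 : Module.Dual ℝ V₂)) ⟨(X, 0), by rw [hgapp]⟩
          simpa [LinearMap.BilinForm.IsOrtho] using this
        refine ⟨((0 : V₁), β), ?_, ?_⟩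
        · simp only [SetLike.mem_coe, LinearMap.mem_ker]
          rw [hhapp]
          refine Prod.ext rfl ?_
          ext X; simpa using hβ X
        · rw [hgapp]; simp [hY]
      · rintro ⟨u, hu, hgu⟩ n ⟨v, rfl⟩
        simp only [SetLike.mem_coe, LinearMap.mem_ker] at hu
        rw [hhapp] at hu
        rw [hgapp] at hgu
        have hu1 : u.1 = 0 := congrArg Prod.fst hu
        have hu2 : u.2 ∘ₗ f = 0 := congrArg Prod.snd hu
        have hg1 : f u.1 = Y := congrArg Prod.fst hgu
        have hg2 : u.2 = β := congrArg Prod.snd hgu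
        rw [hgapp, pairB_apply]
        have h1 : Y = 0 := by rw [← hg1, hu1]; simp
        have h2 : β (f v.1) = 0 := by
          have h3 : (u.2 ∘ₗ f) v.1 = 0 := by rw [hu2]; rfl
          rw [← hg2]; simpa using h3
        simp [h1, h2]
    have hdim : finrank ℝ (V₂ × Module.Dual ℝ V₂) = 2 * finrank ℝ L := by
      rw [hLrank, Module.finrank_prod, Subspace.dual_finrank_eq]; ring
    obtain ⟨hiso, hrank⟩ := image_core g h (pairB V₂) (pairB V₁) (pairB_symm)
      (pairB_nondeg V₂) hcompat horth hker L hLiso hdim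
    refine ⟨(L.comap g).map h, ?_, ?_, ?_⟩
    · ext p
      simp only [SetLike.mem_coe, Submodule.mem_map, Submodule.mem_comap, Set.mem_setOf_eq]
      constructor
      · rintro ⟨u, hu, rfl⟩
        rw [hgapp] at hu
        exact ⟨u.2, by rw [hhapp], by rw [hhapp]; exact hu⟩
      · rintro ⟨β, hβ, hmem⟩
        refine ⟨(p.1, β), by rw [hgapp]; exact hmem, ?_⟩
        rw [hhapp]
        exact Prod.ext rfl hβ.symm
    · intro z hz w hw
      have := hiso z hz w hw
      simpa using this
    · have h1 : finrank ℝ (V₁ × Module.Dual ℝ V₂)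
          = finrank ℝ V₁ + finrank ℝ V₂ := by
        rw [Module.finrank_prod, Subspace.dual_finrank_eq]
      rw [hdim, h1, hLrank] at hrank
      omega
  · -- forward image
    intro L hLiso hLrank
    have horth : (pairB V₁).orthogonal (LinearMap.range h) = (LinearMap.ker g).map h := by
      ext ⟨Y, β⟩
      rw [LinearMap.BilinForm.mem_orthogonal_iff]
      constructor
      · intro hm
        have hβ : β = 0 := by
          ext X
          have := hm (X, (0 : Module.Dual ℝ V₁)) ⟨(X, 0), by rw [hhapp]; simp⟩
          simpa [LinearMap.BilinForm.IsOrtho] using this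
        have hY : f Y = 0 := by
          rw [← Module.forall_dual_apply_eq_zero_iff ℝ (f Y)]
          intro γ
          have := hm ((0 : V₁), γ ∘ₗ f) ⟨(0, γ), by rw [hhapp]⟩
          simpa [LinearMap.BilinForm.IsOrtho] using this
        refine ⟨(Y, (0 : Module.Dual ℝ V₂)), ?_, ?_⟩
        · simp only [SetLike.mem_coe, LinearMap.mem_ker]
          rw [hgapp]
          exact Prod.ext hY rfl
        · rw [hhapp]; simp [hβ]
      · rintro ⟨u, hu, hgu⟩ n ⟨v, rfl⟩
        simp only [SetLike.mem_coe, LinearMap.mem_ker] at hu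
        rw [hgapp] at hu
        rw [hhapp] at hgu
        have hu1 : f u.1 = 0 := congrArg Prod.fst hu
        have hu2 : u.2 = 0 := congrArg Prod.snd hu
        have hg1 : u.1 = Y := congrArg Prod.fst hgu
        have hg2 : u.2 ∘ₗ f = β := congrArg Prod.snd hgu
        rw [hhapp, pairB_apply]
        have h1 : β = 0 := by rw [← hg2, hu2]; rfl
        have h2 : (v.2 ∘ₗ f) Y = 0 := by
          rw [← hg1]; simp [hu1]
        simp only [h1]
        simpa using h2
    have hdim : finrank ℝ (V₁ × Module.Dual ℝ V₁) = 2 * finrank ℝ L := by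
      rw [hLrank, Module.finrank_prod, Subspace.dual_finrank_eq]; ring
    obtain ⟨hiso, hrank⟩ := image_core h g (pairB V₁) (pairB V₂) (pairB_symm)
      (pairB_nondeg V₁) (fun u v => (hcompat u v).symm) horth
      (by rw [inf_comm] at hker; exact hker) L hLiso hdim
    refine ⟨(L.comap h).map g, ?_, ?_, ?_⟩
    · ext q
      simp only [SetLike.mem_coe, Submodule.mem_map, Submodule.mem_comap, Set.mem_setOf_eq]
      constructor
      · rintro ⟨u, hu, rfl⟩
        rw [hhapp] at hu
        exact ⟨u.1, by rw [hgapp], by rw [hgapp]; exact hu⟩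
      · rintro ⟨X, hX, hmem⟩
        refine ⟨(X, q.2), by rw [hhapp]; exact hmem, ?_⟩
        rw [hgapp]
        exact Prod.ext hX.symm rfl
    · intro z hz w hw
      have := hiso z hz w hw
      simpa using this
    · have h1 : finrank ℝ (V₁ × Module.Dual ℝ V₂)
          = finrank ℝ V₁ + finrank ℝ V₂ := by
        rw [Module.finrank_prod, Subspace.dual_finrank_eq]
      rw [hdim, h1, hLrank] at hrank
      omega
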